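/- arXiv:0801.4402 — 2 statements merged into one kernel-verified Lean document; each statement's English description precedes it below -/
import Mathlib

section
/- Let u be a unit quaternion and v a unit quaternion. The matrix M_{u⊗v} of x ↦ u x v̄ commutes appropriately with J = M_{1⊗j} (i.e., is symplectic) if and only if v j = j v, equivalently v = v₀ + v₂ j with v₀² + v₂² = 1. -/
open Matrix Quaternion

noncomputable def quatBasis : Module.Basis (Fin 4) ℝ (Quaternion ℝ) :=
  Module.Basis.ofEquivFun (QuaternionAlgebra.linearEquivTuple (-1 : ℝ) (0 : ℝ) (-1 : ℝ))

/-- The 4×4 real matrix of the ℝ-linear map `x ↦ p * x * star q` on ℍ ≅ ℝ⁴. -/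
noncomputable def quatM (p q : Quaternion ℝ) : Matrix (Fin 4) (Fin 4) ℝ :=
  LinearMap.toMatrix quatBasis quatBasis
    ((LinearMap.mulLeft ℝ p).comp (LinearMap.mulRight ℝ (star q)))

def qi : Quaternion ℝ := ⟨0, 1, 0, 0⟩
def qj : Quaternion ℝ := ⟨0, 0, 1, 0⟩
def qk : Quaternion ℝ := ⟨0, 0, 0, 1⟩

/-- Dot product of the imaginary (vector) parts of two quaternions. -/
def qdot (x y : Quaternion ℝ) : ℝ := x.imI * y.imI + x.imJ * y.imJ + x.imK * y.imK

/-- Cross product of the imaginary (vector) parts, as a pure quaternion. -/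
def qcross (x y : Quaternion ℝ) : Quaternion ℝ :=
  ⟨0, x.imJ * y.imK - x.imK * y.imJ, x.imK * y.imI - x.imI * y.imK,
    x.imI * y.imJ - x.imJ * y.imI⟩

lemma quatM_mul (p q r s : Quaternion ℝ) : quatM p q * quatM r s = quatM (p*r) (q*s) := by
  unfold quatM
  rw [← LinearMap.toMatrix_comp quatBasis quatBasis quatBasis]
  congr 1
  ext x : 1
  simp [LinearMap.mulLeft, LinearMap.mulRight, mul_assoc]

lemma quatBasis_repr (q : Quaternion ℝ) : ⇑(quatBasis.repr q) = ![q.re, q.imI, q.imJ, q.imK] := rfl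

lemma quatBasis_apply (i : Fin 4) :
    quatBasis i = ![(⟨1,0,0,0⟩ : Quaternion ℝ), ⟨0,1,0,0⟩, ⟨0,0,1,0⟩, ⟨0,0,0,1⟩] i := by
  have h := Module.Basis.coe_ofEquivFun (QuaternionAlgebra.linearEquivTuple (-1 : ℝ) (0 : ℝ) (-1 : ℝ))
  fin_cases i <;> exact (congrFun h _).trans (by ext <;> simp)

lemma quatM_apply (p q : Quaternion ℝ) (i j : Fin 4) :
    quatM p q i j = ![(p * (quatBasis j * star q)).re, (p * (quatBasis j * star q)).imI,
      (p * (quatBasis j * star q)).imJ, (p * (quatBasis j * star q)).imK] i := by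
  rw [quatM, LinearMap.toMatrix_apply,
    show ((LinearMap.mulLeft ℝ p).comp (LinearMap.mulRight ℝ (star q))) (quatBasis j) =
      p * (quatBasis j * star q) from rfl, quatBasis_repr]

lemma quatM_transpose (p q : Quaternion ℝ) : (quatM p q)ᵀ = quatM (star p) (star q) := by
  ext i j
  rw [Matrix.transpose_apply, quatM_apply, quatM_apply]
  fin_cases i <;> fin_cases j <;>
    simp [Quaternion.re_mul, Quaternion.imI_mul,
      Quaternion.imJ_mul, Quaternion.imK_mul] <;> simp [quatBasis_apply] <;> ring

lemma quatM_one_inj {a b : Quaternion ℝ} (h : quatM 1 a = quatM 1 b) : a = b := by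
  have := (LinearMap.toMatrix quatBasis quatBasis).injective h
  have h1 := congrArg (fun f => f (1 : Quaternion ℝ)) this
  simp only [LinearMap.comp_apply, LinearMap.mulLeft_apply, LinearMap.mulRight_apply,
    one_mul] at h1
  exact star_injective h1

theorem stmt_12 (u v : Quaternion ℝ) (hu : ‖u‖ = 1) (hv : ‖v‖ = 1) :
    ((quatM u v)ᵀ * quatM 1 qj * quatM u v = quatM 1 qj ↔ v * qj = qj * v) ∧
    (v * qj = qj * v ↔ v.imI = 0 ∧ v.imK = 0 ∧ v.re ^ 2 + v.imJ ^ 2 = 1) := by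
  have hnu : (normSq u : ℝ) = 1 := by
    rw [Quaternion.normSq_eq_norm_mul_self, hu]; norm_num
  have hnv : (normSq v : ℝ) = 1 := by
    rw [Quaternion.normSq_eq_norm_mul_self, hv]; norm_num
  have hsu : star u * u = 1 := by rw [Quaternion.star_mul_self, hnu]; norm_num
  have hsv : star v * v = 1 := by rw [Quaternion.star_mul_self, hnv]; norm_num
  have hvs : v * star v = 1 := by rw [Quaternion.self_mul_star, hnv]; norm_num
  constructor
  · rw [quatM_transpose, quatM_mul, quatM_mul, mul_one, hsu]
    constructor
    · intro h
      have h2 : star v * qj * v = qj := quatM_one_inj h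
      have := congrArg (fun x => v * x) h2
      simp only [← mul_assoc, hvs, one_mul] at this
      exact this.symm
    · intro h
      rw [mul_assoc, ← h, ← mul_assoc, hsv, one_mul]
  · constructor
    · intro h
      have h1 := congrArg QuaternionAlgebra.imI h
      have h3 := congrArg QuaternionAlgebra.imK h
      simp only [Quaternion.imI_mul, Quaternion.imK_mul] at h1 h3
      simp only [qj] at h1 h3
      simp only [Quaternion.normSq_def'] at hnv
      refine ⟨by linarith, by linarith, by nlinarith⟩
    · intro ⟨h1, h2, h3⟩
      ext <;> simp [Quaternion.re_mul, Quaternion.imI_mul, Quaternion.imJ_mul,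
        Quaternion.imK_mul, h1, h2] <;> simp [qj, h1, h2]
end

section
/- Let X ∈ Sp(4,ℝ). Then there exist at most two real matrices H that are simultaneously (i) symmetric, (ii) symplectic, (iii) of positive trace, and (iv) satisfy H² = XᵀX; and at least one such H exists, namely the unique positive definite square root of XᵀX. -/
open Matrix

/-- The standard 4×4 symplectic form matrix J = [[0, I], [-I, 0]]. -/
def symplJ : Matrix (Fin 2 ⊕ Fin 2) (Fin 2 ⊕ Fin 2) ℝ :=
  Matrix.fromBlocks 0 1 (-1) 0


theorem det_fin_four' (A : Matrix (Fin 4) (Fin 4) ℝ) :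
    A.det = A 0 0 * A 1 1 * A 2 2 * A 3 3 - A 0 0 * A 1 1 * A 2 3 * A 3 2 -
      A 0 0 * A 1 2 * A 2 1 * A 3 3 + A 0 0 * A 1 2 * A 2 3 * A 3 1 +
      A 0 0 * A 1 3 * A 2 1 * A 3 2 - A 0 0 * A 1 3 * A 2 2 * A 3 1 -
      A 0 1 * A 1 0 * A 2 2 * A 3 3 + A 0 1 * A 1 0 * A 2 3 * A 3 2 +
      A 0 1 * A 1 2 * A 2 0 * A 3 3 - A 0 1 * A 1 2 * A 2 3 * A 3 0 -
      A 0 1 * A 1 3 * A 2 0 * A 3 2 + A 0 1 * A 1 3 * A 2 2 * A 3 0 +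
      A 0 2 * A 1 0 * A 2 1 * A 3 3 - A 0 2 * A 1 0 * A 2 3 * A 3 1 -
      A 0 2 * A 1 1 * A 2 0 * A 3 3 + A 0 2 * A 1 1 * A 2 3 * A 3 0 +
      A 0 2 * A 1 3 * A 2 0 * A 3 1 - A 0 2 * A 1 3 * A 2 1 * A 3 0 -
      A 0 3 * A 1 0 * A 2 1 * A 3 2 + A 0 3 * A 1 0 * A 2 2 * A 3 1 +
      A 0 3 * A 1 1 * A 2 0 * A 3 2 - A 0 3 * A 1 1 * A 2 2 * A 3 0 -
      A 0 3 * A 1 2 * A 2 0 * A 3 1 + A 0 3 * A 1 2 * A 2 1 * A 3 0 := by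
  rw [show A = !![A 0 0, A 0 1, A 0 2, A 0 3; A 1 0, A 1 1, A 1 2, A 1 3;
      A 2 0, A 2 1, A 2 2, A 2 3; A 3 0, A 3 1, A 3 2, A 3 3] from by
    ext i j; fin_cases i <;> fin_cases j <;> rfl]
  simp [Matrix.det_succ_row_zero, Fin.sum_univ_succ, Fin.succAbove, Fin.castSucc,
    Fin.castAdd, Fin.castLE]
  ring

theorem trace_adj4 (A : Matrix (Fin 4) (Fin 4) ℝ) :
    (adjugate A).trace =
      (A 1 1 * A 2 2 * A 3 3 + A 1 2 * A 2 3 * A 3 1 + A 1 3 * A 2 1 * A 3 2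
        - A 1 3 * A 2 2 * A 3 1 - A 1 1 * A 2 3 * A 3 2 - A 1 2 * A 2 1 * A 3 3) +
      (A 0 0 * A 2 2 * A 3 3 + A 0 2 * A 2 3 * A 3 0 + A 0 3 * A 2 0 * A 3 2
        - A 0 3 * A 2 2 * A 3 0 - A 0 0 * A 2 3 * A 3 2 - A 0 2 * A 2 0 * A 3 3) +
      (A 0 0 * A 1 1 * A 3 3 + A 0 1 * A 1 3 * A 3 0 + A 0 3 * A 1 0 * A 3 1
        - A 0 3 * A 1 1 * A 3 0 - A 0 0 * A 1 3 * A 3 1 - A 0 1 * A 1 0 * A 3 3) +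
      (A 0 0 * A 1 1 * A 2 2 + A 0 1 * A 1 2 * A 2 0 + A 0 2 * A 1 0 * A 2 1
        - A 0 2 * A 1 1 * A 2 0 - A 0 0 * A 1 2 * A 2 1 - A 0 1 * A 1 0 * A 2 2) := by
  rw [Matrix.trace]
  simp only [Matrix.diag, Fin.sum_univ_four, Matrix.adjugate_apply, det_fin_four']
  simp [Matrix.updateRow_apply, Pi.single_apply]
  ring

theorem ch4 (A : Matrix (Fin 4) (Fin 4) ℝ) :
    A*A*A*A - A.trace • (A*A*A) + ((A.trace^2 - (A*A).trace)/2) • (A*A)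
      - (adjugate A).trace • A + A.det • (1 : Matrix (Fin 4) (Fin 4) ℝ) = 0 := by
  have ht : A.trace = A 0 0 + A 1 1 + A 2 2 + A 3 3 := by
    rw [Matrix.trace]; simp [Matrix.diag, Fin.sum_univ_four]
  have ht2 : (A*A).trace = ∑ i, ∑ j, A i j * A j i := by
    rw [Matrix.trace]; simp [Matrix.diag, Matrix.mul_apply]
  ext i j
  fin_cases i <;> fin_cases j <;>
    (simp [Matrix.mul_apply, Matrix.one_apply, ht, ht2, trace_adj4, det_fin_four',
      Fin.sum_univ_four]; ring)

def J4 : Matrix (Fin 4) (Fin 4) ℝ := !![0,0,1,0; 0,0,0,1; -1,0,0,0; 0,-1,0,0]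

theorem pf4 (A : Matrix (Fin 4) (Fin 4) ℝ) :
    (Aᵀ*J4*A) 0 1 * (Aᵀ*J4*A) 2 3 - (Aᵀ*J4*A) 0 2 * (Aᵀ*J4*A) 1 3
      + (Aᵀ*J4*A) 0 3 * (Aᵀ*J4*A) 1 2 = -A.det := by
  simp [Matrix.mul_apply, Matrix.transpose_apply, J4, Fin.sum_univ_four, det_fin_four']
  ring

theorem det_eq_one_of_sympl {A : Matrix (Fin 4) (Fin 4) ℝ} (h : Aᵀ*J4*A = J4) : A.det = 1 := by
  have := pf4 A
  rw [h] at this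
  simp [J4] at this
  linarith

section helpers
variable {n : Type*} [Fintype n] [DecidableEq n]

lemma posDef_of_posSemidef_det_ne_zero {M : Matrix n n ℝ} (hM : M.PosSemidef)
    (h : M.det ≠ 0) : M.PosDef := by
  exact hM.posDef_iff_isUnit.mpr ((Matrix.isUnit_iff_isUnit_det _).mpr (isUnit_iff_ne_zero.mpr h))

lemma posDef_trace_pos [Nonempty n] {M : Matrix n n ℝ} (hM : M.PosDef) : 0 < M.trace := by
  rw [Matrix.trace]
  refine Finset.sum_pos (fun i _ => ?_) Finset.univ_nonempty
  have := hM.dotProduct_mulVec_pos (x := Pi.single i 1) (by simp [Pi.single_eq_same, Function.ne_iff])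
  simpa [Matrix.mulVec_single, Matrix.diag, dotProduct, Pi.single_apply] using this

lemma posDef_transpose_mul_self {M : Matrix n n ℝ} (h : M.det ≠ 0) : (Mᵀ * M).PosDef := by
  apply posDef_of_posSemidef_det_ne_zero
  · have := Matrix.posSemidef_conjTranspose_mul_self M
    simpa [Matrix.conjTranspose_eq_transpose_of_trivial] using this
  · rw [Matrix.det_mul, Matrix.det_transpose]
    exact mul_ne_zero h h

end helpers

-- J4 basic facts
lemma J4_t : J4ᵀ = -J4 := by
  ext i j; fin_cases i <;> fin_cases j <;> norm_num [J4, Matrix.vecHead, Matrix.vecTail]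

lemma J4_mul_J4 : J4 * J4 = -1 := by
  ext i j; fin_cases i <;> fin_cases j <;>
    norm_num [J4, Matrix.mul_apply, Fin.sum_univ_four, Matrix.one_apply, Matrix.vecHead,
      Matrix.vecTail, Fin.ext_iff] <;> simp [Matrix.cons_val]

lemma negJ4_mul_J4 : (-J4) * J4 = 1 := by rw [neg_mul, J4_mul_J4, neg_neg]
lemma J4_mul_negJ4 : J4 * (-J4) = 1 := by rw [mul_neg, J4_mul_J4, neg_neg]

section main4

variable {X : Matrix (Fin 4) (Fin 4) ℝ}

lemma symm_sympl_inv {H : Matrix (Fin 4) (Fin 4) ℝ} (h : H * J4 * H = J4) :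
    ((-J4) * H * J4) * H = 1 := by
  calc ((-J4) * H * J4) * H = (-J4) * (H * J4 * H) := by simp only [Matrix.mul_assoc]
    _ = 1 := by rw [h, negJ4_mul_J4]

lemma X_J_Xt (hX : Xᵀ * J4 * X = J4) : X * J4 * Xᵀ = J4 := by
  have h1 : ((-J4) * Xᵀ * J4) * X = 1 := by
    calc ((-J4) * Xᵀ * J4) * X = (-J4) * (Xᵀ * J4 * X) := by simp only [Matrix.mul_assoc]
      _ = 1 := by rw [hX, negJ4_mul_J4]
  have h2 : X * ((-J4) * Xᵀ * J4) = 1 := mul_eq_one_comm.mpr h1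
  have h4 : X * (-J4) * Xᵀ * (J4 * (-J4)) = -J4 := by
    calc X * (-J4) * Xᵀ * (J4 * (-J4)) = (X * ((-J4) * Xᵀ * J4)) * (-J4) := by
          simp only [Matrix.mul_assoc]
      _ = -J4 := by rw [h2, one_mul]
  rw [J4_mul_negJ4, mul_one] at h4
  have := congrArg Neg.neg h4
  simpa [mul_neg, neg_mul] using this

theorem exists4 (hX : Xᵀ * J4 * X = J4) :
    ∃ H : Matrix (Fin 4) (Fin 4) ℝ,
      Hᵀ = H ∧ Hᵀ * J4 * H = J4 ∧ 0 < H.trace ∧ H * H = Xᵀ * X ∧ H.PosDef := by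
  set S := Xᵀ * X with hSdef
  have hdetX : X.det = 1 := det_eq_one_of_sympl hX
  have hSpd : S.PosDef := posDef_transpose_mul_self (by rw [hdetX]; norm_num)
  have hSsym : Sᵀ = S := by rw [hSdef, Matrix.transpose_mul, Matrix.transpose_transpose]
  have hSsympl : S * J4 * S = J4 := by
    have hL : X * J4 * Xᵀ = J4 := X_J_Xt hX
    calc S * J4 * S = Xᵀ * (X * J4 * Xᵀ) * X := by
          rw [hSdef]; simp only [Matrix.mul_assoc]
      _ = Xᵀ * J4 * X := by rw [hL, Matrix.mul_assoc]
      _ = J4 := hX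
  have hSpsd := hSpd.posSemidef
  set P := (open scoped MatrixOrder in CFC.sqrt S) with hPdef
  have hPP : P * P = S := by
    open scoped MatrixOrder in exact CFC.sqrt_mul_sqrt_self S hSpsd.nonneg
  have hPpsd : P.PosSemidef := by
    open scoped MatrixOrder in exact (CFC.sqrt_nonneg S).posSemidef
  have hPdet : P.det ≠ 0 := by
    intro h0
    have : S.det = 0 := by rw [← hPP, Matrix.det_mul, h0, mul_zero]
    exact absurd this (ne_of_gt hSpd.det_pos)
  have hPpd : P.PosDef := posDef_of_posSemidef_det_ne_zero hPpsd hPdet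
  have hPt : Pᵀ = P := by
    have := hPpd.1
    rwa [Matrix.IsHermitian, Matrix.conjTranspose_eq_transpose_of_trivial] at this
  -- inverse of S via symplectic relation
  have hSinv : S⁻¹ = J4 * S * (-J4) := by
    apply Matrix.inv_eq_left_inv
    calc J4 * S * (-J4) * S = J4 * (S * (-(J4 * S))) := by
          simp only [Matrix.mul_assoc, Matrix.neg_mul, Matrix.mul_neg]
      _ = -(J4 * (S * J4 * S)) := by simp only [Matrix.mul_assoc, Matrix.mul_neg]
      _ = -(J4 * J4) := by rw [hSsympl]
      _ = 1 := by rw [J4_mul_J4, neg_neg]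
  have hQpsd : ((-J4) * P⁻¹ * J4).PosSemidef := by
    have h1 : P⁻¹.PosSemidef := hPpd.inv.posSemidef
    have h2 := h1.conjTranspose_mul_mul_same J4
    rwa [Matrix.conjTranspose_eq_transpose_of_trivial, J4_t] at h2
  have hPinv2 : P⁻¹ * P⁻¹ = S⁻¹ := by
    rw [← Matrix.mul_inv_rev, hPP]
  have hQQ : ((-J4) * P⁻¹ * J4) * ((-J4) * P⁻¹ * J4) = S := by
    calc ((-J4) * P⁻¹ * J4) * ((-J4) * P⁻¹ * J4)
        = (-J4) * P⁻¹ * (J4 * (-J4)) * P⁻¹ * J4 := by simp only [Matrix.mul_assoc]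
      _ = (-J4) * (P⁻¹ * P⁻¹) * J4 := by rw [J4_mul_negJ4]; simp only [Matrix.mul_one, Matrix.mul_assoc]
      _ = (-J4) * S⁻¹ * J4 := by rw [hPinv2]
      _ = (-J4) * (J4 * S * (-J4)) * J4 := by rw [hSinv]
      _ = ((-J4) * J4) * S * ((-J4) * J4) := by simp only [Matrix.mul_assoc]
      _ = S := by rw [negJ4_mul_J4, one_mul, mul_one]
  have hQP : (-J4) * P⁻¹ * J4 = P := by
    open scoped MatrixOrder in exact (CFC.sqrt_unique hQQ hQpsd.nonneg).symm
  have hPJ : J4 * P = P⁻¹ * J4 := by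
    calc J4 * P = J4 * ((-J4) * P⁻¹ * J4) := by rw [hQP]
      _ = (J4 * (-J4)) * P⁻¹ * J4 := by simp only [Matrix.mul_assoc]
      _ = P⁻¹ * J4 := by rw [J4_mul_negJ4, one_mul]
  have hPsympl : Pᵀ * J4 * P = J4 := by
    rw [hPt]
    calc P * J4 * P = P * (J4 * P) := by rw [Matrix.mul_assoc]
      _ = P * (P⁻¹ * J4) := by rw [hPJ]
      _ = (P * P⁻¹) * J4 := by rw [Matrix.mul_assoc]
      _ = J4 := by rw [Matrix.mul_nonsing_inv _ (isUnit_iff_ne_zero.mpr hPdet), one_mul]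
  exact ⟨P, hPt, hPsympl, posDef_trace_pos hPpd, hPP, hPpd⟩

noncomputable def gmat (S : Matrix (Fin 4) (Fin 4) ℝ) (t : ℝ) : Matrix (Fin 4) (Fin 4) ℝ :=
  t⁻¹ • ((S + 1)⁻¹ * (S * S + ((t ^ 2 - S.trace) / 2) • S + 1))

noncomputable def coefA (S : Matrix (Fin 4) (Fin 4) ℝ) : ℝ := (S * S).trace / 4
noncomputable def coefB (S : Matrix (Fin 4) (Fin 4) ℝ) : ℝ :=
  -(S.trace * (S * S).trace) / 2 - 2 * (S * S).trace
noncomputable def coefC (S : Matrix (Fin 4) (Fin 4) ℝ) : ℝ :=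
  (S * (S * (S * S))).trace - S.trace * (S * (S * S)).trace
    + S.trace ^ 2 * (S * S).trace / 4 + 2 * (S * S).trace - S.trace ^ 2 + 4
noncomputable def discr (S : Matrix (Fin 4) (Fin 4) ℝ) : ℝ :=
  coefB S ^ 2 - 4 * coefA S * coefC S
noncomputable def root1 (S : Matrix (Fin 4) (Fin 4) ℝ) : ℝ :=
  (-coefB S + Real.sqrt (_root_.discr S)) / (2 * coefA S)
noncomputable def root2 (S : Matrix (Fin 4) (Fin 4) ℝ) : ℝ :=
  (-coefB S - Real.sqrt (_root_.discr S)) / (2 * coefA S)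

theorem key4 {S H : Matrix (Fin 4) (Fin 4) ℝ} (hHS : H * H = S)
    (hHt : Hᵀ = H) (hHsympl : Hᵀ * J4 * H = J4) (hτ : 0 < H.trace)
    (hS1 : IsUnit (S + 1).det) (ht2 : 0 < (S * S).trace) :
    H = gmat S (Real.sqrt (root1 S)) ∨ H = gmat S (Real.sqrt (root2 S)) := by
  set τ := H.trace with hτdef
  have hτne : τ ≠ 0 := ne_of_gt hτ
  have h1 : H * J4 * H = J4 := by rwa [hHt] at hHsympl
  have hdetH : H.det = 1 := det_eq_one_of_sympl hHsympl
  have hKH : ((-J4) * H * J4) * H = 1 := symm_sympl_inv h1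
  have hadj : adjugate H = (-J4) * H * J4 := by
    have hm : H * adjugate H = 1 := by rw [Matrix.mul_adjugate, hdetH, one_smul]
    calc adjugate H = (((-J4) * H * J4) * H) * adjugate H := by rw [hKH, one_mul]
      _ = ((-J4) * H * J4) * (H * adjugate H) := by rw [Matrix.mul_assoc]
      _ = (-J4) * H * J4 := by rw [hm, mul_one]
  have htradj : (adjugate H).trace = τ := by
    rw [hadj]
    have e : (-J4) * H * J4 = -(J4 * H * J4) := by simp only [Matrix.neg_mul]
    rw [e, Matrix.trace_neg, Matrix.trace_mul_cycle (A := J4) (B := H) (C := J4)]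
    have : J4 * J4 * H = -H := by rw [J4_mul_J4, neg_one_mul]
    rw [this, Matrix.trace_neg, neg_neg]
  -- Cayley-Hamilton, specialized
  have hch := ch4 H
  have e1 : H * H * H = S * H := by rw [hHS]
  have e2 : H * H * H * H = S * S := by
    rw [e1, Matrix.mul_assoc, hHS]
  have etr : (H * H).trace = S.trace := by rw [hHS]
  rw [e2, e1, etr, htradj, hdetH, one_smul, hHS, ← hτdef] at hch
  -- hch : S*S - τ•(S*H) + ((τ^2 - S.trace)/2)•S - τ•H + 1 = 0
  have hcommS : H * S = S * H := by
    rw [← hHS, Matrix.mul_assoc]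
  have hcomm1 : H * (S + 1) = (S + 1) * H := by
    rw [mul_add, add_mul, mul_one, one_mul, hcommS]
  have hR : τ • ((S + 1) * H) = S * S + ((τ ^ 2 - S.trace) / 2) • S + 1 := by
    have expand : (S + 1) * H = S * H + H := by rw [add_mul, one_mul]
    rw [expand, smul_add]
    linear_combination (norm := module) -hch
  have hu2 : (S * S + ((τ ^ 2 - S.trace) / 2) • S + 1) *
      (S * S + ((τ ^ 2 - S.trace) / 2) • S + 1) = (τ * τ) • ((S + 1) * ((S + 1) * S)) := by
    rw [← hR, Matrix.smul_mul, Matrix.mul_smul, smul_smul]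
    congr 1
    calc (S + 1) * H * ((S + 1) * H) = (S + 1) * ((H * (S + 1)) * H) := by
          simp only [Matrix.mul_assoc]
      _ = (S + 1) * (((S + 1) * H) * H) := by rw [hcomm1]
      _ = (S + 1) * ((S + 1) * S) := by rw [Matrix.mul_assoc, hHS]
  have htr := congrArg Matrix.trace hu2
  simp only [mul_add, add_mul, Matrix.smul_mul, Matrix.mul_smul, mul_one, one_mul,
    smul_smul, Matrix.mul_assoc, Matrix.trace_add, Matrix.trace_smul, Matrix.trace_one,
    Fintype.card_fin, smul_eq_mul] at htr
  set u := τ ^ 2 with hudef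
  have hqu : coefA S * u ^ 2 + coefB S * u + coefC S = 0 := by
    simp only [coefA, coefB, coefC, hudef]
    linear_combination htr
  have hd : _root_.discr S = (2 * coefA S * u + coefB S) ^ 2 := by
    simp only [_root_.discr]
    linear_combination (-4 * coefA S) * hqu
  have hdnn : 0 ≤ _root_.discr S := by rw [hd]; exact sq_nonneg _
  have hsq : Real.sqrt (_root_.discr S) ^ 2 = _root_.discr S := Real.sq_sqrt hdnn
  have hAne : coefA S ≠ 0 := by simp only [coefA]; positivity
  have hfac : (2 * coefA S * u + coefB S - Real.sqrt (_root_.discr S)) *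
      (2 * coefA S * u + coefB S + Real.sqrt (_root_.discr S)) = 0 := by
    linear_combination -hd - hsq
  have hu12 : u = root1 S ∨ u = root2 S := by
    rcases mul_eq_zero.mp hfac with h | h
    · left; simp only [root1]; field_simp; linarith
    · right; simp only [root2]; field_simp; linarith
  -- H = gmat S τ
  have hHg : H = gmat S τ := by
    have h5 : (S + 1)⁻¹ * (τ • ((S + 1) * H)) = τ • H := by
      rw [Matrix.mul_smul, ← Matrix.mul_assoc, Matrix.nonsing_inv_mul _ hS1, one_mul]
    rw [hR] at h5
    have h6 := congrArg (fun M => τ⁻¹ • M) h5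
    simp only [smul_smul, inv_mul_cancel₀ hτne, one_smul] at h6
    rw [gmat, ← h6]
  have hτsqrt : τ = Real.sqrt u := by
    rw [hudef, Real.sqrt_sq hτ.le]
  rcases hu12 with h | h
  · left; rw [hHg, hτsqrt, h]
  · right; rw [hHg, hτsqrt, h]

lemma posDef_diag_pos {n : Type*} [Fintype n] [DecidableEq n] {M : Matrix n n ℝ}
    (hM : M.PosDef) (i : n) : 0 < M i i := by
  have := hM.dotProduct_mulVec_pos (x := Pi.single i 1) (by simp [Function.ne_iff])
  simpa [Matrix.mulVec_single, dotProduct, Pi.single_apply] using this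

theorem uniq4 (hX : Xᵀ * J4 * X = J4) :
    ∃ A B : Matrix (Fin 4) (Fin 4) ℝ,
      ∀ H : Matrix (Fin 4) (Fin 4) ℝ,
        Hᵀ = H → Hᵀ * J4 * H = J4 → 0 < H.trace → H * H = Xᵀ * X →
          H = A ∨ H = B := by
  set S := Xᵀ * X with hSdef
  have hdetX : X.det = 1 := det_eq_one_of_sympl hX
  have hSpd : S.PosDef := posDef_transpose_mul_self (by rw [hdetX]; norm_num)
  have hSsym : Sᵀ = S := by rw [hSdef, Matrix.transpose_mul, Matrix.transpose_transpose]
  have hS1 : IsUnit (S + 1).det :=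
    isUnit_iff_ne_zero.mpr (ne_of_gt (hSpd.add_posSemidef Matrix.PosSemidef.one).det_pos)
  have hsym : ∀ i j, S j i = S i j := by
    intro i j
    have := congrFun (congrFun hSsym i) j
    simpa [Matrix.transpose_apply] using this
  have ht2 : 0 < (S * S).trace := by
    have e : (S * S).trace = ∑ i, ∑ j, S i j * S j i := by
      simp [Matrix.trace, Matrix.diag, Matrix.mul_apply]
    rw [e]
    refine Finset.sum_pos' (fun i _ => Finset.sum_nonneg fun j _ => ?_)
      ⟨0, Finset.mem_univ 0, Finset.sum_pos' (fun j _ => ?_) ⟨0, Finset.mem_univ 0, ?_⟩⟩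
    · rw [hsym i j]; exact mul_self_nonneg _
    · rw [hsym 0 j]; exact mul_self_nonneg _
    · exact mul_pos (posDef_diag_pos hSpd 0) (posDef_diag_pos hSpd 0)
  exact ⟨gmat S (Real.sqrt (root1 S)), gmat S (Real.sqrt (root2 S)),
    fun H h1 h2 h3 h4 => key4 h4 h1 h2 h3 hS1 ht2⟩

end main4

section transport

lemma posDef_submatrix_equiv {m n : Type*} [Fintype m] [DecidableEq m] [Fintype n]
    [DecidableEq n] {M : Matrix n n ℝ} (e : m ≃ n) (hM : M.PosDef) :
    (M.submatrix e e).PosDef := by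
  refine .of_dotProduct_mulVec_pos ?_ ?_
  · have h1 := hM.1
    rw [Matrix.IsHermitian] at h1 ⊢
    rw [Matrix.conjTranspose_submatrix, h1]
  · intro x hx
    have hy : (x ∘ e.symm) ≠ 0 := by
      intro h0
      apply hx
      funext i
      have := congrFun h0 (e i)
      simpa using this
    have key : star x ⬝ᵥ (M.submatrix e e *ᵥ x) = star (x ∘ e.symm) ⬝ᵥ (M *ᵥ (x ∘ e.symm)) := by
      rw [Matrix.submatrix_mulVec_equiv]
      rw [dotProduct, dotProduct]
      exact Fintype.sum_equiv e _ _ (fun i => by simp)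
    rw [key]
    exact hM.dotProduct_mulVec_pos hy

noncomputable def eqv : (Fin 2 ⊕ Fin 2) ≃ Fin 4 := finSumFinEquiv

noncomputable def phi (M : Matrix (Fin 2 ⊕ Fin 2) (Fin 2 ⊕ Fin 2) ℝ) :
    Matrix (Fin 4) (Fin 4) ℝ := M.submatrix eqv.symm eqv.symm

noncomputable def psi (M : Matrix (Fin 4) (Fin 4) ℝ) :
    Matrix (Fin 2 ⊕ Fin 2) (Fin 2 ⊕ Fin 2) ℝ := M.submatrix eqv eqv

lemma psi_phi (M : Matrix (Fin 2 ⊕ Fin 2) (Fin 2 ⊕ Fin 2) ℝ) : psi (phi M) = M := by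
  rw [phi, psi, Matrix.submatrix_submatrix]
  simp [Equiv.symm_comp_self]

lemma phi_psi (M : Matrix (Fin 4) (Fin 4) ℝ) : phi (psi M) = M := by
  rw [phi, psi, Matrix.submatrix_submatrix]
  simp [Equiv.self_comp_symm]

lemma phi_inj : Function.Injective phi := by
  intro M N h
  have := congrArg psi h
  rwa [psi_phi, psi_phi] at this

lemma phi_mul (M N : Matrix (Fin 2 ⊕ Fin 2) (Fin 2 ⊕ Fin 2) ℝ) :
    phi (M * N) = phi M * phi N :=
  (Matrix.submatrix_mul_equiv M N _ eqv.symm _).symm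

lemma phi_transpose (M : Matrix (Fin 2 ⊕ Fin 2) (Fin 2 ⊕ Fin 2) ℝ) :
    phi (Mᵀ) = (phi M)ᵀ := by
  rw [phi, phi, Matrix.transpose_submatrix]

lemma phi_trace (M : Matrix (Fin 2 ⊕ Fin 2) (Fin 2 ⊕ Fin 2) ℝ) :
    (phi M).trace = M.trace := by
  rw [phi, Matrix.trace, Matrix.trace]
  exact Equiv.sum_comp eqv.symm (fun j => M.diag j)

lemma phi_J : phi symplJ = J4 := by
  ext i j
  fin_cases i <;> fin_cases j <;>
    norm_num [phi, J4, symplJ, eqv, Matrix.submatrix_apply, finSumFinEquiv, Fin.divNat,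
      Fin.modNat, Matrix.fromBlocks, Matrix.one_apply, Matrix.vecHead, Matrix.vecTail,
      Fin.addCases, Fin.ext_iff]

end transport

theorem stmt_19 (X : Matrix (Fin 2 ⊕ Fin 2) (Fin 2 ⊕ Fin 2) ℝ)
    (hX : Xᵀ * symplJ * X = symplJ) :
    (∃ H : Matrix (Fin 2 ⊕ Fin 2) (Fin 2 ⊕ Fin 2) ℝ,
      Hᵀ = H ∧ Hᵀ * symplJ * H = symplJ ∧ 0 < H.trace ∧ H * H = Xᵀ * X ∧ H.PosDef) ∧
    ∃ A B : Matrix (Fin 2 ⊕ Fin 2) (Fin 2 ⊕ Fin 2) ℝ,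
      ∀ H : Matrix (Fin 2 ⊕ Fin 2) (Fin 2 ⊕ Fin 2) ℝ,
        Hᵀ = H → Hᵀ * symplJ * H = symplJ → 0 < H.trace → H * H = Xᵀ * X →
          H = A ∨ H = B := by
  have hX4 : (phi X)ᵀ * J4 * phi X = J4 := by
    rw [← phi_transpose, ← phi_J, ← phi_mul, ← phi_mul, hX]
  constructor
  · obtain ⟨H', h1, h2, h3, h4, h5⟩ := exists4 hX4
    refine ⟨psi H', ?_, ?_, ?_, ?_, ?_⟩
    · apply phi_inj
      rw [phi_transpose, phi_psi, h1]
    · apply phi_inj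
      rw [phi_mul, phi_mul, phi_transpose, phi_psi, phi_J]
      exact h2
    · have := phi_trace (psi H')
      rw [phi_psi] at this
      rw [← this]; exact h3
    · apply phi_inj
      rw [phi_mul, phi_psi, h4, phi_mul, phi_transpose]
    · exact posDef_submatrix_equiv eqv h5
  · obtain ⟨A', B', hAB⟩ := uniq4 hX4
    refine ⟨psi A', psi B', fun H h1 h2 h3 h4 => ?_⟩
    have k1 : (phi H)ᵀ = phi H := by rw [← phi_transpose, h1]
    have k2 : (phi H)ᵀ * J4 * phi H = J4 := by
      rw [← phi_transpose, ← phi_J, ← phi_mul, ← phi_mul, h2]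
    have k3 : 0 < (phi H).trace := by rw [phi_trace]; exact h3
    have k4 : phi H * phi H = (phi X)ᵀ * phi X := by
      rw [← phi_mul, h4, phi_mul, phi_transpose]
    rcases hAB (phi H) k1 k2 k3 k4 with h | h
    · left; have := congrArg psi h; rwa [psi_phi] at this
    · right; have := congrArg psi h; rwa [psi_phi] at this
end
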